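/- Let σ, T, σ_β, Σ_T > 0, ψ > 0, m_β ∈ ℝ, and set ε := √( σ²T / (Σ_T² + ψ²(σ²T + σ_β²)) ) and I(z,s) := ε (s − ψ (z + m_β)). Let μ be the product on ℝ² of the Gaussian measure with mean −m_β and variance σ²T + σ_β² (first factor) and the Gaussian measure with mean 0 and variance Σ_T² (second factor), and let ν be the Gaussian measure on ℝ with mean 0 and variance σ²T. Then for every Borel probability measure π on ℝ² × ℝ whose pushforward under the first projection is μ and under the second projection is ν, one has ∫ [ (ψ/2)(y − z)² + (y − z) s ] dπ((z,s), y) ≤ ∫ [ (ψ/2)(I(z,s) − z)² + (I(z,s) − z) s ] dμ(z,s). -/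

import Mathlib

open MeasureTheory ProbabilityTheory

open scoped NNReal ENNReal

section GaussHelpers
open Real

lemma myint_odd {b : ℝ} (hb : 0 < b) : ∫ x : ℝ, x * rexp (-b * x^2) = 0 := by
  have h := integral_neg_eq_self (fun x : ℝ => x * rexp (-b * x^2)) volume
  simp only [neg_mul, neg_sq] at h
  rw [integral_neg] at h
  simp only [neg_mul]
  linarith

lemma myintegrable_sq {b : ℝ} (hb : 0 < b) :
    Integrable (fun x : ℝ => x^2 * rexp (-b * x^2)) := by
  have h := integrable_rpow_mul_exp_neg_mul_sq hb (s := 2) (by norm_num)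
  convert h using 2 with x
  rw [show (2:ℝ) = ((2:ℕ):ℝ) by norm_num, Real.rpow_natCast]

lemma myint_sq {b : ℝ} (hb : 0 < b) :
    ∫ x : ℝ, x^2 * rexp (-b * x^2) = Real.sqrt (π / b) / (2*b) := by
  have hInt := myintegrable_sq hb
  have hsplit := integral_add_compl (measurableSet_Ioi (a := (0:ℝ))) hInt
  rw [Set.compl_Ioi] at hsplit
  have hIic : ∫ x in Set.Iic (0:ℝ), x^2 * rexp (-b * x^2)
      = ∫ x in Set.Ioi (0:ℝ), x^2 * rexp (-b * x^2) := by
    have h := integral_comp_neg_Ioi (c := (0:ℝ)) (fun x => x^2 * rexp (-b * x^2))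
    simp only [neg_zero, neg_sq] at h
    rw [← h]
  have hIoi : ∫ x in Set.Ioi (0:ℝ), x^2 * rexp (-b * x^2)
      = b ^ (-(3:ℝ)/2) * (1/2) * Real.Gamma (3/2) := by
    have h := integral_rpow_mul_exp_neg_mul_rpow (p := 2) (q := 2) (by norm_num) (by norm_num) hb
    rw [show ((2:ℝ)+1)/2 = 3/2 by norm_num, show -((2:ℝ)+1)/2 = -(3:ℝ)/2 by norm_num] at h
    rw [← h]
    refine setIntegral_congr_fun measurableSet_Ioi (fun x hx => ?_)
    rw [show (2:ℝ) = ((2:ℕ):ℝ) by norm_num, Real.rpow_natCast]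
  have hG : Real.Gamma (3/2) = Real.sqrt π / 2 := by
    have h := Real.Gamma_add_one (s := 1/2) (by norm_num)
    rw [show (1:ℝ)/2 + 1 = 3/2 by norm_num] at h
    rw [h, Real.Gamma_one_half_eq]
    ring
  have hrpow : b ^ (-(3:ℝ)/2) = (b * Real.sqrt b)⁻¹ := by
    rw [show -(3:ℝ)/2 = -(1 + 1/2) by norm_num, Real.rpow_neg hb.le,
      Real.rpow_add hb, Real.rpow_one, ← Real.sqrt_eq_rpow]
  have hsb : Real.sqrt b > 0 := Real.sqrt_pos.mpr hb
  have hsb2 : Real.sqrt b ^ 2 = b := Real.sq_sqrt hb.le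
  have hdiv : Real.sqrt (π / b) = Real.sqrt π / Real.sqrt b := Real.sqrt_div' π hb.le
  rw [hIic, hIoi] at hsplit
  rw [← hsplit, hG, hrpow, hdiv]
  field_simp
  nlinarith [hsb2, hsb, Real.sqrt_nonneg π]

lemma myintegrable_dirac {f : ℝ → ℝ} (a : ℝ) (hf : Measurable f) :
    Integrable f (Measure.dirac a) := by
  refine ⟨hf.aestronglyMeasurable, ?_⟩
  rw [HasFiniteIntegral, lintegral_dirac' _ hf.enorm]
  exact enorm_lt_top

lemma gauss_density_integral (m : ℝ) {v : ℝ≥0} (hv : v ≠ 0) (g : ℝ → ℝ) :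
    ∫ x, g x ∂gaussianReal m v = ∫ x, gaussianPDFReal m v x * g x := by
  rw [gaussianReal_of_var_ne_zero m hv, gaussianPDF_def]
  have h1 : (fun x => ENNReal.ofReal (gaussianPDFReal m v x))
      = fun x => ((gaussianPDFReal m v x).toNNReal : ℝ≥0∞) := rfl
  rw [h1, integral_withDensity_eq_integral_smul (measurable_gaussianPDFReal m v).real_toNNReal]
  congr 1
  ext x
  simp [NNReal.smul_def, Real.coe_toNNReal _ (gaussianPDFReal_nonneg m v x)]

lemma gauss_integrable_iff (m : ℝ) {v : ℝ≥0} (hv : v ≠ 0) (g : ℝ → ℝ) :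
    Integrable g (gaussianReal m v)
      ↔ Integrable (fun x => g x * gaussianPDFReal m v x) volume := by
  rw [gaussianReal_of_var_ne_zero m hv,
    integrable_withDensity_iff (measurable_gaussianPDF m v)
      (ae_of_all _ fun x => ENNReal.ofReal_lt_top)]
  refine integrable_congr (ae_of_all _ fun x => ?_)
  simp [gaussianPDF, ENNReal.toReal_ofReal (gaussianPDFReal_nonneg m v x)]

lemma gauss_centered_sq (m : ℝ) {v : ℝ≥0} (hv : v ≠ 0) :
    ∫ x, (x - m)^2 ∂gaussianReal m v = v := by
  have hvpos : 0 < (v:ℝ) := by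
    exact_mod_cast (zero_lt_iff.mpr hv : 0 < v)
  set b : ℝ := ((2:ℝ)*v)⁻¹ with hbdef
  have hb : 0 < b := by positivity
  rw [gauss_density_integral m hv]
  have key : ∀ x : ℝ, gaussianPDFReal m v x * (x - m)^2
      = (fun y => (Real.sqrt (2*π*v))⁻¹ * (y^2 * rexp (-b * y^2))) (x - m) := by
    intro x
    simp only [gaussianPDFReal]
    rw [show -(x-m)^2/(2*(v:ℝ)) = -b*(x-m)^2 by rw [hbdef]; field_simp]
    ring
  simp_rw [key]
  rw [integral_sub_right_eq_self (fun y => (Real.sqrt (2*π*(v:ℝ)))⁻¹ * (y^2 * rexp (-b*y^2))) m]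
  rw [integral_const_mul, myint_sq hb]
  have h1 : π / b = 2*π*(v:ℝ) := by rw [hbdef]; field_simp; try ring
  have h3 : (2:ℝ)*b = (v:ℝ)⁻¹ := by rw [hbdef]; field_simp; try ring
  rw [h1, h3]
  have h2 : (0:ℝ) < Real.sqrt (2*π*v) := Real.sqrt_pos.mpr (by positivity)
  field_simp

lemma gauss_integral_id (m : ℝ) (v : ℝ≥0) : ∫ x, x ∂gaussianReal m v = m := by
  by_cases hv : v = 0
  · simp [hv, integral_dirac]
  · have hvpos : 0 < (v:ℝ) := by
      exact_mod_cast (zero_lt_iff.mpr hv : 0 < v)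
    set b : ℝ := ((2:ℝ)*v)⁻¹ with hbdef
    have hb : 0 < b := by positivity
    set c : ℝ := (Real.sqrt (2*π*v))⁻¹ with hcdef
    rw [gauss_density_integral m hv]
    have key : ∀ x : ℝ, gaussianPDFReal m v x * x
        = (fun y => c*(y*rexp (-b*y^2)) + (c*m)*rexp (-b*y^2)) (x - m) := by
      intro x
      simp only [gaussianPDFReal, hcdef]
      rw [show -(x-m)^2/(2*(v:ℝ)) = -b*(x-m)^2 by rw [hbdef]; field_simp]
      ring
    simp_rw [key]
    rw [integral_sub_right_eq_self (fun y => c*(y*rexp (-b*y^2)) + (c*m)*rexp (-b*y^2)) m]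
    rw [integral_add ((integrable_mul_exp_neg_mul_sq hb).const_mul c)
      ((integrable_exp_neg_mul_sq hb).const_mul (c*m))]
    rw [integral_const_mul, integral_const_mul, myint_odd hb, integral_gaussian]
    have h1 : π / b = 2*π*(v:ℝ) := by rw [hbdef]; field_simp; try ring
    rw [h1, hcdef]
    have h2 : (0:ℝ) < Real.sqrt (2*π*v) := Real.sqrt_pos.mpr (by positivity)
    field_simp
    ring

lemma gauss_integrable_sq (m : ℝ) (v : ℝ≥0) :
    Integrable (fun x => x^2) (gaussianReal m v) := by
  by_cases hv : v = 0
  · rw [hv, gaussianReal_zero_var]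
    exact myintegrable_dirac m (measurable_id.pow_const 2)
  · have hvpos : 0 < (v:ℝ) := by
      exact_mod_cast (zero_lt_iff.mpr hv : 0 < v)
    set b : ℝ := ((2:ℝ)*v)⁻¹ with hbdef
    have hb : 0 < b := by positivity
    set c : ℝ := (Real.sqrt (2*π*v))⁻¹ with hcdef
    rw [gauss_integrable_iff m hv]
    have key : (fun x : ℝ => x^2 * gaussianPDFReal m v x)
        = fun x => (fun y => c*(y^2*rexp (-b*y^2)) + (2*m*c)*(y*rexp (-b*y^2))
            + (m^2*c)*rexp (-b*y^2)) (x - m) := by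
      funext x
      simp only [gaussianPDFReal, hcdef]
      rw [show -(x-m)^2/(2*(v:ℝ)) = -b*(x-m)^2 by rw [hbdef]; field_simp]
      ring
    rw [key]
    exact ((((myintegrable_sq hb).const_mul c).add
      ((integrable_mul_exp_neg_mul_sq hb).const_mul (2*m*c))).add
      ((integrable_exp_neg_mul_sq hb).const_mul (m^2*c))).comp_sub_right m

lemma gauss_integrable_id (m : ℝ) (v : ℝ≥0) :
    Integrable (fun x : ℝ => x) (gaussianReal m v) := by
  have h := (gauss_integrable_sq m v).add (integrable_const (μ := gaussianReal m v) (1:ℝ))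
  refine h.mono measurable_id.aestronglyMeasurable (ae_of_all _ fun x => ?_)
  simp only [Pi.add_apply, Real.norm_eq_abs, id]
  rw [abs_of_nonneg (by positivity : (0:ℝ) ≤ x^2+1)]
  nlinarith [sq_abs x, sq_nonneg (|x| - 1), abs_nonneg x]

lemma gauss_integral_sq (m : ℝ) (v : ℝ≥0) :
    ∫ x, x^2 ∂gaussianReal m v = v + m^2 := by
  by_cases hv : v = 0
  · simp [hv, integral_dirac]
  · have h2 := gauss_centered_sq m hv
    have hI2 := gauss_integrable_sq m v
    have hI1 := gauss_integrable_id m v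
    have hexp : ∀ x:ℝ, (x-m)^2 = x^2 + ((-2*m)*x + m^2) := fun x => by ring
    simp_rw [hexp] at h2
    have hg : Integrable (fun x : ℝ => -2*m*x + m^2) (gaussianReal m v) := by
      simpa using (hI1.const_mul (-2*m)).add (integrable_const (m^2))
    rw [integral_add hI2 hg,
      integral_add (hI1.const_mul (-2*m)) (integrable_const _),
      integral_const_mul, gauss_integral_id, integral_const] at h2
    simp only [measure_univ, probReal_univ, ENNReal.toReal_one, smul_eq_mul, one_mul] at h2
    linarith

lemma push_integral {α β : Type*} [MeasurableSpace α] [MeasurableSpace β]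
    {P : Measure α} {φ : α → β} (hφ : Measurable φ) {Q : Measure β}
    (h : P.map φ = Q) {f : β → ℝ} (hf : Measurable f) :
    ∫ y, f y ∂Q = ∫ x, f (φ x) ∂P := by
  rw [← h]; exact integral_map hφ.aemeasurable hf.aestronglyMeasurable

lemma push_integrable {α β : Type*} [MeasurableSpace α] [MeasurableSpace β]
    {P : Measure α} {φ : α → β} (hφ : Measurable φ) {Q : Measure β}
    (h : P.map φ = Q) {f : β → ℝ} (hf : Integrable f Q) :
    Integrable (fun x => f (φ x)) P := by
  rw [← h] at hf
  exact (integrable_map_measure hf.aestronglyMeasurable hφ.aemeasurable).mp hf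

lemma prod_gauss_quad_integrable (m1 m2 : ℝ) (v1 v2 : ℝ≥0) (c0 c1 c2 c11 c22 c12 : ℝ) :
    Integrable (fun p : ℝ×ℝ => c0 + c1*p.1 + c2*p.2 + c11*p.1^2 + c22*p.2^2 + c12*(p.1*p.2))
      ((gaussianReal m1 v1).prod (gaussianReal m2 v2)) := by
  have hz : Integrable (fun p : ℝ×ℝ => p.1 * 1)
      ((gaussianReal m1 v1).prod (gaussianReal m2 v2)) :=
    (gauss_integrable_id m1 v1).mul_prod (integrable_const 1)
  have hs : Integrable (fun p : ℝ×ℝ => (1:ℝ) * p.2)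
      ((gaussianReal m1 v1).prod (gaussianReal m2 v2)) :=
    (integrable_const 1).mul_prod (gauss_integrable_id m2 v2)
  have hz2 : Integrable (fun p : ℝ×ℝ => p.1^2 * 1)
      ((gaussianReal m1 v1).prod (gaussianReal m2 v2)) :=
    (gauss_integrable_sq m1 v1).mul_prod (integrable_const 1)
  have hs2 : Integrable (fun p : ℝ×ℝ => (1:ℝ) * p.2^2)
      ((gaussianReal m1 v1).prod (gaussianReal m2 v2)) :=
    (integrable_const 1).mul_prod (gauss_integrable_sq m2 v2)
  have hzs : Integrable (fun p : ℝ×ℝ => p.1 * p.2)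
      ((gaussianReal m1 v1).prod (gaussianReal m2 v2)) :=
    (gauss_integrable_id m1 v1).mul_prod (gauss_integrable_id m2 v2)
  have := (((((integrable_const (μ := (gaussianReal m1 v1).prod (gaussianReal m2 v2)) c0).add
    (hz.const_mul c1)).add (hs.const_mul c2)).add (hz2.const_mul c11)).add
    (hs2.const_mul c22)).add (hzs.const_mul c12)
  refine this.congr (ae_of_all _ fun p => ?_)
  simp only [Pi.add_apply]
  ring

lemma prod_gauss_quad_integral (m1 m2 : ℝ) (v1 v2 : ℝ≥0) (c0 c1 c2 c11 c22 c12 : ℝ) :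
    ∫ p : ℝ×ℝ, (c0 + c1*p.1 + c2*p.2 + c11*p.1^2 + c22*p.2^2 + c12*(p.1*p.2))
        ∂((gaussianReal m1 v1).prod (gaussianReal m2 v2))
      = c0 + c1*m1 + c2*m2 + c11*((v1:ℝ)+m1^2) + c22*((v2:ℝ)+m2^2) + c12*(m1*m2) := by
  set P := gaussianReal m1 v1
  set Q := gaussianReal m2 v2
  have B1 : ∫ p : ℝ×ℝ, p.1 * 1 ∂(P.prod Q) = m1 := by
    rw [integral_prod_mul (fun x : ℝ => x) (fun _ : ℝ => (1:ℝ)), gauss_integral_id,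
      integral_const]
    simp
  have B2 : ∫ p : ℝ×ℝ, (1:ℝ) * p.2 ∂(P.prod Q) = m2 := by
    rw [integral_prod_mul (fun _ : ℝ => (1:ℝ)) (fun x : ℝ => x), gauss_integral_id,
      integral_const]
    simp
  have B3 : ∫ p : ℝ×ℝ, p.1^2 * 1 ∂(P.prod Q) = (v1:ℝ) + m1^2 := by
    rw [integral_prod_mul (fun x : ℝ => x^2) (fun _ : ℝ => (1:ℝ)), gauss_integral_sq,
      integral_const]
    simp
  have B4 : ∫ p : ℝ×ℝ, (1:ℝ) * p.2^2 ∂(P.prod Q) = (v2:ℝ) + m2^2 := by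
    rw [integral_prod_mul (fun _ : ℝ => (1:ℝ)) (fun x : ℝ => x^2), gauss_integral_sq,
      integral_const]
    simp
  have B5 : ∫ p : ℝ×ℝ, p.1 * p.2 ∂(P.prod Q) = m1 * m2 := by
    rw [integral_prod_mul (fun x : ℝ => x) (fun x : ℝ => x), gauss_integral_id,
      gauss_integral_id]
  have hz : Integrable (fun p : ℝ×ℝ => p.1 * 1) (P.prod Q) :=
    (gauss_integrable_id m1 v1).mul_prod (integrable_const 1)
  have hs : Integrable (fun p : ℝ×ℝ => (1:ℝ) * p.2) (P.prod Q) :=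
    (integrable_const 1).mul_prod (gauss_integrable_id m2 v2)
  have hz2 : Integrable (fun p : ℝ×ℝ => p.1^2 * 1) (P.prod Q) :=
    (gauss_integrable_sq m1 v1).mul_prod (integrable_const 1)
  have hs2 : Integrable (fun p : ℝ×ℝ => (1:ℝ) * p.2^2) (P.prod Q) :=
    (integrable_const 1).mul_prod (gauss_integrable_sq m2 v2)
  have hzs : Integrable (fun p : ℝ×ℝ => p.1 * p.2) (P.prod Q) :=
    (gauss_integrable_id m1 v1).mul_prod (gauss_integrable_id m2 v2)
  have e : ∀ p : ℝ×ℝ, c0 + c1*p.1 + c2*p.2 + c11*p.1^2 + c22*p.2^2 + c12*(p.1*p.2)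
      = c0 + (c1*(p.1*1) + (c2*((1:ℝ)*p.2) + (c11*(p.1^2*1) + (c22*((1:ℝ)*p.2^2)
        + c12*(p.1*p.2))))) := fun p => by ring
  simp_rw [e]
  have I5 : Integrable (fun p : ℝ×ℝ => c22*((1:ℝ)*p.2^2) + c12*(p.1*p.2)) (P.prod Q) :=
    (hs2.const_mul c22).add (hzs.const_mul c12)
  have I4 : Integrable (fun p : ℝ×ℝ => c11*(p.1^2*1) + (c22*((1:ℝ)*p.2^2) + c12*(p.1*p.2)))
      (P.prod Q) := (hz2.const_mul c11).add I5
  have I3 : Integrable (fun p : ℝ×ℝ => c2*((1:ℝ)*p.2) + (c11*(p.1^2*1)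
      + (c22*((1:ℝ)*p.2^2) + c12*(p.1*p.2)))) (P.prod Q) := (hs.const_mul c2).add I4
  have I2 : Integrable (fun p : ℝ×ℝ => c1*(p.1*1) + (c2*((1:ℝ)*p.2) + (c11*(p.1^2*1)
      + (c22*((1:ℝ)*p.2^2) + c12*(p.1*p.2))))) (P.prod Q) := (hz.const_mul c1).add I3
  rw [integral_add (integrable_const c0) I2,
    integral_add (hz.const_mul c1) I3,
    integral_add (hs.const_mul c2) I4,
    integral_add (hz2.const_mul c11) I5,
    integral_add (hs2.const_mul c22) (hzs.const_mul c12),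
    integral_const]
  have B1' := B1; simp only [mul_one] at B1'
  have B2' := B2; simp only [one_mul] at B2'
  have B3' := B3; simp only [mul_one] at B3'
  have B4' := B4; simp only [one_mul] at B4'
  simp only [integral_const_mul, mul_one, one_mul, measure_univ, probReal_univ, ENNReal.toReal_one,
    smul_eq_mul]
  rw [B1', B2', B3', B4', B5]
  ring

end GaussHelpers

set_option maxHeartbeats 1000000 in
/-- Transport optimality for the linear-quadratic payoff (Lemma 6.3): with
`μ = N(−m_β, σ²T + σ_β²) ⊗ N(0, Σ_T²)` the joint law of `(Z̃_T, S_T)`,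
`ν = N(0, σ²T)` the law of `Y_T`, `ε = √(σ²T/(Σ_T² + ψ²(σ²T + σ_β²)))` and
`I(z,s) = ε(s − ψ(z + m_β))`, every coupling `π` of `(μ, ν)` satisfies
`∫ [(ψ/2)(y−z)² + (y−z)s] dπ ≤ ∫ [(ψ/2)(I(z,s)−z)² + (I(z,s)−z)s] dμ`.
(`SigT` stands for `Σ_T`.) -/
theorem linear_quadratic_coupling_optimal
    (σ T σβ SigT ψ mβ : ℝ) (hσ : 0 < σ) (hT : 0 < T) (hσβ : 0 < σβ)
    (hSigT : 0 < SigT) (hψ : 0 < ψ) :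
    ∀ π : Measure ((ℝ × ℝ) × ℝ), IsProbabilityMeasure π →
      π.map Prod.fst =
        (gaussianReal (-mβ) ((σ^2*T + σβ^2).toNNReal)).prod
          (gaussianReal 0 ((SigT^2).toNNReal)) →
      π.map Prod.snd = gaussianReal 0 ((σ^2*T).toNNReal) →
      ∫ q, ((ψ/2) * (q.2 - q.1.1)^2 + (q.2 - q.1.1) * q.1.2) ∂π ≤
        ∫ p, ((ψ/2) * (Real.sqrt (σ^2*T / (SigT^2 + ψ^2*(σ^2*T + σβ^2)))
                  * (p.2 - ψ*(p.1 + mβ)) - p.1)^2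
              + (Real.sqrt (σ^2*T / (SigT^2 + ψ^2*(σ^2*T + σβ^2)))
                  * (p.2 - ψ*(p.1 + mβ)) - p.1) * p.2)
          ∂((gaussianReal (-mβ) ((σ^2*T + σβ^2).toNNReal)).prod
              (gaussianReal 0 ((SigT^2).toNNReal))) := by
  intro π hπ h1 h2
  have hA : (0:ℝ) < σ^2*T := by positivity
  have ha : (0:ℝ) < σ^2*T + σβ^2 := by positivity
  have hbb : (0:ℝ) < SigT^2 := by positivity
  set V : ℝ := SigT^2 + ψ^2*(σ^2*T + σβ^2) with hVdef
  have hV : (0:ℝ) < V := by rw [hVdef]; positivity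
  set u : ℝ := Real.sqrt (σ^2*T / V) with hudef
  have hu : (0:ℝ) < u := Real.sqrt_pos.mpr (div_pos hA hV)
  have hu2 : u^2 * V = σ^2*T := by
    rw [hudef, Real.sq_sqrt (le_of_lt (div_pos hA hV))]
    field_simp
  set μZ := gaussianReal (-mβ) ((σ^2*T + σβ^2).toNNReal) with hμZ
  set μS := gaussianReal 0 ((SigT^2).toNNReal) with hμS
  set ν := gaussianReal 0 ((σ^2*T).toNNReal) with hν
  set μm := μZ.prod μS with hμm
  have hca : (((σ^2*T + σβ^2).toNNReal : ℝ≥0) : ℝ) = σ^2*T + σβ^2 := Real.coe_toNNReal _ ha.le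
  have hcb : (((SigT^2).toNNReal : ℝ≥0) : ℝ) = SigT^2 := Real.coe_toNNReal _ hbb.le
  have hcA : (((σ^2*T).toNNReal : ℝ≥0) : ℝ) = σ^2*T := Real.coe_toNNReal _ hA.le
  -- ν moments
  have hν2 : ∫ y, y^2 ∂ν = σ^2*T := by
    rw [hν, gauss_integral_sq, hcA]; ring
  have hν1 : ∫ y, y ∂ν = 0 := by rw [hν, gauss_integral_id]
  -- transfers through snd
  have Iy2π : Integrable (fun q : (ℝ×ℝ)×ℝ => q.2^2) π :=
    push_integrable measurable_snd h2 (gauss_integrable_sq 0 _)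
  have Iyπ : Integrable (fun q : (ℝ×ℝ)×ℝ => q.2) π :=
    push_integrable measurable_snd h2 (gauss_integrable_id 0 _)
  have Ey2π : ∫ q : (ℝ×ℝ)×ℝ, q.2^2 ∂π = σ^2*T := by
    have h := push_integral measurable_snd h2 (f := fun y : ℝ => y^2)
      (measurable_id.pow_const 2)
    rw [← h]; exact hν2
  have Eyπ : ∫ q : (ℝ×ℝ)×ℝ, q.2 ∂π = 0 := by
    have h := push_integral measurable_snd h2 (f := fun y : ℝ => y) measurable_id
    rw [← h]; exact hν1
  -- quadratic integrals over μm
  have eW2 : (fun p : ℝ×ℝ => (p.2 - ψ*(p.1+mβ))^2)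
      = fun p : ℝ×ℝ => (ψ^2*mβ^2) + (2*ψ^2*mβ)*p.1 + (-(2*ψ*mβ))*p.2 + (ψ^2)*p.1^2
        + (1:ℝ)*p.2^2 + (-(2*ψ))*(p.1*p.2) := funext fun p => by ring
  have JW2 : Integrable (fun p : ℝ×ℝ => (p.2 - ψ*(p.1+mβ))^2) μm := by
    rw [eW2, hμm, hμZ, hμS]; exact prod_gauss_quad_integrable _ _ _ _ _ _ _ _ _ _
  have hW2 : ∫ p : ℝ×ℝ, (p.2 - ψ*(p.1+mβ))^2 ∂μm = V := by
    rw [eW2, hμm, hμZ, hμS, prod_gauss_quad_integral, hca, hcb, hVdef]; ring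
  have eF : (fun p : ℝ×ℝ => (ψ/2)*p.1^2 - p.1*p.2)
      = fun p : ℝ×ℝ => (0:ℝ) + (0:ℝ)*p.1 + (0:ℝ)*p.2 + (ψ/2)*p.1^2
        + (0:ℝ)*p.2^2 + (-1:ℝ)*(p.1*p.2) := funext fun p => by ring
  have JF : Integrable (fun p : ℝ×ℝ => (ψ/2)*p.1^2 - p.1*p.2) μm := by
    rw [eF, hμm, hμZ, hμS]; exact prod_gauss_quad_integrable _ _ _ _ _ _ _ _ _ _
  have hF : ∫ p : ℝ×ℝ, ((ψ/2)*p.1^2 - p.1*p.2) ∂μm = (ψ/2)*((σ^2*T + σβ^2)+mβ^2) := by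
    rw [eF, hμm, hμZ, hμS, prod_gauss_quad_integral, hca, hcb]; ring
  -- transfers through fst
  have hmeasF : Measurable (fun p : ℝ×ℝ => (ψ/2)*p.1^2 - p.1*p.2) :=
    ((measurable_fst.pow_const 2).const_mul (ψ/2)).sub (measurable_fst.mul measurable_snd)
  have hmeasW2 : Measurable (fun p : ℝ×ℝ => (p.2 - ψ*(p.1+mβ))^2) :=
    (measurable_snd.sub ((measurable_fst.add_const mβ).const_mul ψ)).pow_const 2
  have IW2π : Integrable (fun q : (ℝ×ℝ)×ℝ => (q.1.2 - ψ*(q.1.1+mβ))^2) π :=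
    push_integrable measurable_fst h1 JW2
  have IFπ : Integrable (fun q : (ℝ×ℝ)×ℝ => (ψ/2)*q.1.1^2 - q.1.1*q.1.2) π :=
    push_integrable measurable_fst h1 JF
  have EW2π : ∫ q : (ℝ×ℝ)×ℝ, (q.1.2 - ψ*(q.1.1+mβ))^2 ∂π = V := by
    have h := push_integral measurable_fst h1 hmeasW2
    rw [← h]; exact hW2
  have EFπ : ∫ q : (ℝ×ℝ)×ℝ, ((ψ/2)*q.1.1^2 - q.1.1*q.1.2) ∂π
      = (ψ/2)*((σ^2*T + σβ^2)+mβ^2) := by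
    have h := push_integral measurable_fst h1 hmeasF
    rw [← h]; exact hF
  -- cross term integrable
  have IyW : Integrable (fun q : (ℝ×ℝ)×ℝ => q.2 * (q.1.2 - ψ*(q.1.1+mβ))) π := by
    have hgI : Integrable (fun q : (ℝ×ℝ)×ℝ =>
        (1/2)*(q.1.2 - ψ*(q.1.1+mβ))^2 + (1/2)*q.2^2) π :=
      (IW2π.const_mul (1/2)).add (Iy2π.const_mul (1/2))
    have hm : Measurable (fun q : (ℝ×ℝ)×ℝ => q.2 * (q.1.2 - ψ*(q.1.1+mβ))) :=
      measurable_snd.mul ((measurable_snd.comp measurable_fst).sub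
        (((measurable_fst.comp measurable_fst).add_const mβ).const_mul ψ))
    refine hgI.mono hm.aestronglyMeasurable (ae_of_all _ fun q => ?_)
    simp only [Real.norm_eq_abs]
    rw [abs_of_nonneg (by positivity : (0:ℝ) ≤ (1/2)*(q.1.2 - ψ*(q.1.1+mβ))^2 + (1/2)*q.2^2),
      abs_mul]
    nlinarith [sq_nonneg (|q.2| - |q.1.2 - ψ*(q.1.1+mβ)|), sq_abs q.2,
      sq_abs (q.1.2 - ψ*(q.1.1+mβ)), abs_nonneg q.2, abs_nonneg (q.1.2 - ψ*(q.1.1+mβ))]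
  -- split the LHS integral
  have eL : (fun q : (ℝ×ℝ)×ℝ => (ψ/2) * (q.2 - q.1.1)^2 + (q.2 - q.1.1) * q.1.2)
      = fun q : (ℝ×ℝ)×ℝ => ((ψ/2)*q.2^2 + ψ*mβ*q.2) + q.2*(q.1.2 - ψ*(q.1.1+mβ))
        + ((ψ/2)*q.1.1^2 - q.1.1*q.1.2) := funext fun q => by ring
  have IG1 : Integrable (fun q : (ℝ×ℝ)×ℝ => (ψ/2)*q.2^2 + ψ*mβ*q.2) π :=
    (Iy2π.const_mul (ψ/2)).add (Iyπ.const_mul (ψ*mβ))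
  have I12 : Integrable (fun q : (ℝ×ℝ)×ℝ =>
      ((ψ/2)*q.2^2 + ψ*mβ*q.2) + q.2*(q.1.2 - ψ*(q.1.1+mβ))) π := IG1.add IyW
  have EG1 : ∫ q : (ℝ×ℝ)×ℝ, ((ψ/2)*q.2^2 + ψ*mβ*q.2) ∂π = (ψ/2)*(σ^2*T) := by
    rw [integral_add (Iy2π.const_mul (ψ/2)) (Iyπ.const_mul (ψ*mβ)),
      integral_const_mul, integral_const_mul, Ey2π, Eyπ]
    ring
  have hsplit : ∫ q, ((ψ/2) * (q.2 - q.1.1)^2 + (q.2 - q.1.1) * q.1.2) ∂π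
      = (ψ/2)*(σ^2*T) + (∫ q : (ℝ×ℝ)×ℝ, q.2*(q.1.2 - ψ*(q.1.1+mβ)) ∂π)
        + (ψ/2)*((σ^2*T + σβ^2)+mβ^2) := by
    rw [eL, integral_add I12 IFπ, integral_add IG1 IyW, EG1, EFπ]
  -- AM-GM bound on the cross term
  have Ibound : Integrable (fun q : (ℝ×ℝ)×ℝ =>
      (u/2)*(q.1.2 - ψ*(q.1.1+mβ))^2 + (1/(2*u))*q.2^2) π :=
    (IW2π.const_mul (u/2)).add (Iy2π.const_mul (1/(2*u)))
  have hcross : (∫ q : (ℝ×ℝ)×ℝ, q.2*(q.1.2 - ψ*(q.1.1+mβ)) ∂π)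
      ≤ (u/2)*V + (1/(2*u))*(σ^2*T) := by
    have hmono : (∫ q : (ℝ×ℝ)×ℝ, q.2*(q.1.2 - ψ*(q.1.1+mβ)) ∂π)
        ≤ ∫ q : (ℝ×ℝ)×ℝ, ((u/2)*(q.1.2 - ψ*(q.1.1+mβ))^2 + (1/(2*u))*q.2^2) ∂π := by
      refine integral_mono IyW Ibound fun q => ?_
      have hident : (u/2)*(q.1.2 - ψ*(q.1.1+mβ))^2 + (1/(2*u))*q.2^2
          - q.2*(q.1.2 - ψ*(q.1.1+mβ))
          = (1/(2*u))*(u*(q.1.2 - ψ*(q.1.1+mβ)) - q.2)^2 := by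
        field_simp
        ring
      have h0 : (0:ℝ) ≤ (1/(2*u))*(u*(q.1.2 - ψ*(q.1.1+mβ)) - q.2)^2 := by positivity
      linarith [hident, h0]
    calc (∫ q : (ℝ×ℝ)×ℝ, q.2*(q.1.2 - ψ*(q.1.1+mβ)) ∂π) ≤ _ := hmono
      _ = (u/2)*V + (1/(2*u))*(σ^2*T) := by
        rw [integral_add (IW2π.const_mul (u/2)) (Iy2π.const_mul (1/(2*u))),
          integral_const_mul, integral_const_mul, EW2π, Ey2π]
  -- RHS evaluation
  have eR : (fun p : ℝ×ℝ => (ψ/2) * (u * (p.2 - ψ*(p.1 + mβ)) - p.1)^2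
        + (u * (p.2 - ψ*(p.1 + mβ)) - p.1) * p.2)
      = fun p : ℝ×ℝ => (ψ*(u*ψ*mβ)^2/2) + (ψ*(1+u*ψ)*(u*ψ*mβ))*p.1
        + (-(ψ*u*(u*ψ*mβ)) - u*ψ*mβ)*p.2 + (ψ*(1+u*ψ)^2/2)*p.1^2
        + (ψ*u^2/2 + u)*p.2^2 + (-(ψ*u*(1+u*ψ)) - (1+u*ψ))*(p.1*p.2) :=
    funext fun p => by ring
  have hRHS : ∫ p, ((ψ/2) * (u * (p.2 - ψ*(p.1 + mβ)) - p.1)^2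
        + (u * (p.2 - ψ*(p.1 + mβ)) - p.1) * p.2) ∂μm
      = (ψ*(u*ψ*mβ)^2/2) + (ψ*(1+u*ψ)*(u*ψ*mβ))*(-mβ)
        + (-(ψ*u*(u*ψ*mβ)) - u*ψ*mβ)*0 + (ψ*(1+u*ψ)^2/2)*((σ^2*T + σβ^2)+(-mβ)^2)
        + (ψ*u^2/2 + u)*(SigT^2+0^2) + (-(ψ*u*(1+u*ψ)) - (1+u*ψ))*((-mβ)*0) := by
    rw [eR, hμm, hμZ, hμS, prod_gauss_quad_integral, hca, hcb]
  rw [hsplit, hRHS]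
  have hfinal : (ψ/2)*(σ^2*T) + ((u/2)*V + (1/(2*u))*(σ^2*T))
      + (ψ/2)*((σ^2*T + σβ^2)+mβ^2)
      = (ψ*(u*ψ*mβ)^2/2) + (ψ*(1+u*ψ)*(u*ψ*mβ))*(-mβ)
        + (-(ψ*u*(u*ψ*mβ)) - u*ψ*mβ)*0 + (ψ*(1+u*ψ)^2/2)*((σ^2*T + σβ^2)+(-mβ)^2)
        + (ψ*u^2/2 + u)*(SigT^2+0^2) + (-(ψ*u*(1+u*ψ)) - (1+u*ψ))*((-mβ)*0) := by
    rw [hVdef] at hu2 ⊢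
    field_simp
    linear_combination (-1 - ψ*u) * hu2
  linarith [hcross]
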